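/- Let p be a prime number with p ≡ 3 (mod 8) or p ≡ 5 (mod 8). If the polynomial x⁴ + 2p ∈ ℚ[x] is irreducible over ℚ, then it is 2-superirreducible over ℚ. -/

import Mathlib

private lemma dec16a : ∀ r, r < 16 → (r % 2 = 1 → r^4 % 16 = 1) := by decide
private lemma dec16b : ∀ r, r < 16 → (r^2 % 16 = 0 ∨ r^2 % 16 = 1 ∨ r^2 % 16 = 4 ∨ r^2 % 16 = 9) := by decide
private lemma dec8a : ∀ r, r < 8 → (r % 2 = 1 → r^2 % 8 = 1) := by decide

lemma odd_pow4_mod16 {x : ℕ} (h : x % 2 = 1) : x^4 % 16 = 1 := by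
  rw [Nat.pow_mod]
  exact dec16a (x % 16) (Nat.mod_lt _ (by norm_num))
    (by rw [Nat.mod_mod_of_dvd x (by norm_num : (2:ℕ) ∣ 16)]; exact h)

lemma odd_pow4_mod8 {x : ℕ} (h : x % 2 = 1) : x^4 % 8 = 1 := by
  have := odd_pow4_mod16 h; omega

lemma odd_sq_mod8 {x : ℕ} (h : x % 2 = 1) : x^2 % 8 = 1 := by
  rw [Nat.pow_mod]
  exact dec8a (x % 8) (Nat.mod_lt _ (by norm_num))
    (by rw [Nat.mod_mod_of_dvd x (by norm_num : (2:ℕ) ∣ 8)]; exact h)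

lemma sq_mod16 (z : ℕ) : z^2 % 16 = 0 ∨ z^2 % 16 = 1 ∨ z^2 % 16 = 4 ∨ z^2 % 16 = 9 := by
  rw [Nat.pow_mod]
  exact dec16b (z % 16) (Nat.mod_lt _ (by norm_num))

lemma pow_mod_two (d k : ℕ) (hk : k ≠ 0) : d^k % 2 = d % 2 := by
  rw [Nat.pow_mod]
  rcases Nat.mod_two_eq_zero_or_one d with h | h <;> rw [h] <;> simp [zero_pow hk]

lemma even_pow4_mod16 {x : ℕ} (h : x % 2 = 0) : x^4 % 16 = 0 := by
  obtain ⟨m, rfl⟩ : ∃ m, x = 2*m := ⟨x/2, by omega⟩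
  have : (2*m)^4 = 16*m^4 := by ring
  rw [this]; omega

lemma extract_pow4 {m n k : ℕ} (h : Nat.Coprime m n) (e : m * n = k^4) : ∃ d, m = d^4 :=
  exists_eq_pow_of_mul_eq_pow (Nat.isUnit_iff.2 h) e

lemma level2 (p : ℕ) (hp : p.Prime) (hmod : p % 8 = 3 ∨ p % 8 = 5)
    (σ τ d a₁ : ℕ) (hprod : σ * τ = 2*p*a₁^4) (hsum : σ + τ = d^2)
    (hco : Nat.Coprime σ τ) (h2 : 2 ∣ σ) (hd : d % 2 = 1) (ha₁ : a₁ ≠ 0) :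
    ∃ c e : ℕ, c ∣ a₁ ∧ c ≠ 0 ∧ e^4 + 2*p*c^4 = d^2 := by
  have hppos : 0 < p := hp.pos
  have hpodd : p % 2 = 1 := by omega
  have hp2 : Nat.Prime 2 := Nat.prime_two
  have hστ0 : σ * τ ≠ 0 := by
    rw [hprod]; positivity
  have hσ0 : σ ≠ 0 := fun h => hστ0 (by simp [h])
  have hτ0 : τ ≠ 0 := fun h => hστ0 (by simp [h])
  have hτ2 : ¬ 2 ∣ τ := by
    intro h; have := Nat.dvd_gcd h2 h; rw [hco] at this; omega
  have hτodd : τ % 2 = 1 := by omega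
  have hpστ : p ∣ σ ∨ p ∣ τ := (Nat.Prime.dvd_mul hp).mp ⟨2*a₁^4, by rw [hprod]; ring⟩
  have hco2p : Nat.Coprime 2 p := (hp2.coprime_iff_not_dvd).mpr (by omega)
  rcases hpστ with hpσ | hpτ
  · -- p ∣ σ : the recursing case
    have hpτ : ¬ p ∣ τ := by
      intro h; have := Nat.dvd_gcd hpσ h; rw [hco] at this
      exact Nat.Prime.one_lt hp |>.ne' (Nat.dvd_one.mp this)
    have hkey : τ * (8*p^3*σ) = (2*p*a₁)^4 := by
      rw [show τ * (8*p^3*σ) = 8*p^3*(σ*τ) from by ring, hprod]; ring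
    have hcop : Nat.Coprime τ (8*p^3*σ) := by
      have c8 : Nat.Coprime τ 8 := by
        have : Nat.Coprime τ 2 := ((hp2.coprime_iff_not_dvd).mpr hτ2).symm
        simpa using (this.pow_right 3 : Nat.Coprime τ (2^3))
      have cp : Nat.Coprime τ (p^3) :=
        (((hp.coprime_iff_not_dvd).mpr hpτ).symm).pow_right 3
      exact (c8.mul_right cp).mul_right hco.symm
    obtain ⟨d₂, hd₂⟩ := extract_pow4 hcop hkey
    have hd₂0 : d₂ ≠ 0 := by rintro rfl; exact hτ0 (by simpa using hd₂)
    have hd₂2 : ¬ 2 ∣ d₂ := by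
      intro h; exact hτ2 (hd₂ ▸ dvd_pow h (by norm_num))
    have hd₂p : ¬ p ∣ d₂ := by
      intro h; exact hpτ (hd₂ ▸ dvd_pow h (by norm_num))
    have hdvd : d₂^4 ∣ (2*p) * a₁^4 :=
      ⟨σ, by rw [show (2*p)*a₁^4 = σ*τ from hprod.symm, hd₂]; ring⟩
    have hcod : Nat.Coprime (d₂^4) (2*p) := by
      have : Nat.Coprime d₂ (2*p) :=
        ((hp2.coprime_iff_not_dvd).mpr hd₂2).symm.mul_right
          (((hp.coprime_iff_not_dvd).mpr hd₂p).symm)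
      exact this.pow_left 4
    have hdvd2 : d₂^4 ∣ a₁^4 := (Nat.Coprime.dvd_of_dvd_mul_left hcod hdvd)
    have hdvd3 : d₂ ∣ a₁ := (Nat.pow_dvd_pow_iff (by norm_num : 4 ≠ 0)).mp hdvd2
    obtain ⟨c, hc⟩ := hdvd3
    have hc0 : c ≠ 0 := by rintro rfl; simp at hc; exact ha₁ hc
    have hσc : σ = 2*p*c^4 := by
      have h1 : σ * d₂^4 = (2*p*c^4) * d₂^4 := by
        rw [show σ * d₂^4 = σ * τ from by rw [hd₂], hprod, hc]; ring
      exact Nat.eq_of_mul_eq_mul_right (Nat.pow_pos (Nat.pos_of_ne_zero hd₂0)) h1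
    refine ⟨c, d₂, ⟨d₂, by rw [hc]; ring⟩, hc0, ?_⟩
    rw [← hsum, hσc, hd₂]; ring
  · -- p ∣ τ : killed mod 8
    have hpσ : ¬ p ∣ σ := by
      intro h; have := Nat.dvd_gcd h hpτ; rw [hco] at this
      exact Nat.Prime.one_lt hp |>.ne' (Nat.dvd_one.mp this)
    have hkey : (8*σ) * (p^3*τ) = (2*p*a₁)^4 := by
      rw [show (8*σ)*(p^3*τ) = 8*p^3*(σ*τ) from by ring, hprod]; ring
    have hcop : Nat.Coprime (8*σ) (p^3*τ) := by
      have c8p : Nat.Coprime 8 (p^3) := by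
        simpa using ((hco2p.pow_right 3).pow_left 3 : Nat.Coprime (2^3) (p^3))
      have c8τ : Nat.Coprime 8 τ := by
        have : Nat.Coprime 2 τ := (hp2.coprime_iff_not_dvd).mpr hτ2
        simpa using (this.pow_left 3 : Nat.Coprime (2^3) τ)
      have cσp : Nat.Coprime σ (p^3) := (((hp.coprime_iff_not_dvd).mpr hpσ).symm).pow_right 3
      exact Nat.Coprime.mul (c8p.mul_right c8τ) (cσp.mul_right hco)
    obtain ⟨e, he⟩ := extract_pow4 hcop hkey
    obtain ⟨f, hf⟩ := extract_pow4 hcop.symm (by rw [mul_comm]; exact hkey)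
    have he2 : 2 ∣ e := hp2.dvd_of_dvd_pow (n := 4) (by rw [← he]; exact ⟨4*σ, by ring⟩)
    obtain ⟨e₁, rfl⟩ := he2
    have hσe : σ = 2*e₁^4 := by
      have h16 : (2*e₁)^4 = 16*e₁^4 := by ring
      rw [h16] at he
      have : e₁^4*16 = σ*8 := by omega
      omega
    have hpf : p ∣ f := hp.dvd_of_dvd_pow (n := 4) (by rw [← hf]; exact ⟨p^2*τ, by ring⟩)
    obtain ⟨f₁, rfl⟩ := hpf
    have hτf : τ = p*f₁^4 := by
      have h1 : p^3*τ = p^3*(p*f₁^4) := by rw [hf]; ring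
      exact Nat.eq_of_mul_eq_mul_left (Nat.pow_pos hppos) h1
    have hf₁odd : f₁ % 2 = 1 := by
      by_contra h
      have h0 : f₁ % 2 = 0 := by omega
      have : f₁^4 % 2 = 0 := by rw [pow_mod_two _ _ (by norm_num)]; exact h0
      have : τ % 2 = 0 := by
        rw [hτf, Nat.mul_mod, this, Nat.mul_zero, Nat.zero_mod]
      omega
    -- kill mod 8
    exfalso
    have hA : e₁^4 % 16 = 0 ∨ e₁^4 % 16 = 1 := by
      rcases Nat.mod_two_eq_zero_or_one e₁ with h | h
      · exact Or.inl (even_pow4_mod16 h)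
      · exact Or.inr (odd_pow4_mod16 h)
    have hB : (p*f₁^4) % 8 = p % 8 := by
      rw [Nat.mul_mod, odd_pow4_mod8 hf₁odd]; omega
    have hD : d^2 % 8 = 1 := odd_sq_mod8 hd
    have hsum' : 2*e₁^4 + p*f₁^4 = d^2 := by rw [← hσe, ← hτf]; exact hsum
    generalize hA' : e₁^4 = A at hA hsum'
    generalize hB' : p*f₁^4 = B at hB hsum'
    generalize hD' : d^2 = D at hD hsum'
    omega
theorem nat_no_quartic (p : ℕ) (hp : p.Prime) (hmod : p % 8 = 3 ∨ p % 8 = 5) :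
    ∀ y x z : ℕ, x^4 + 2*p*y^4 = z^2 → y = 0 := by
  intro y
  induction y using Nat.strong_induction_on with
  | _ y IH =>
  intro x z heq
  by_contra hy0
  have hppos : 0 < p := hp.pos
  have hpodd : p % 2 = 1 := by omega
  have hp2 : Nat.Prime 2 := Nat.prime_two
  -- Step 1: reduce to the coprime case
  by_cases hg1 : Nat.gcd x y = 1
  case neg =>
    set g := Nat.gcd x y with hgdef
    have hg0 : g ≠ 0 := fun h => hy0 (Nat.eq_zero_of_gcd_eq_zero_right h)
    have hg2 : 2 ≤ g := by omega
    obtain ⟨x₁, hx₁⟩ : g ∣ x := Nat.gcd_dvd_left x y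
    obtain ⟨y₁, hy₁⟩ : g ∣ y := Nat.gcd_dvd_right x y
    have h4 : (g^2)^2 ∣ z^2 := ⟨x₁^4 + 2*p*y₁^4, by rw [← heq, hx₁, hy₁]; ring⟩
    obtain ⟨z₁, hz₁⟩ : g^2 ∣ z := (Nat.pow_dvd_pow_iff (by norm_num : 2 ≠ 0)).mp h4
    have heq' : x₁^4 + 2*p*y₁^4 = z₁^2 := by
      have h1 : g^4*(x₁^4 + 2*p*y₁^4) = g^4*z₁^2 := by
        rw [show g^4*(x₁^4 + 2*p*y₁^4) = (g*x₁)^4 + 2*p*(g*y₁)^4 from by ring,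
          ← hx₁, ← hy₁, heq, hz₁]; ring
      exact Nat.eq_of_mul_eq_mul_left (Nat.pow_pos (Nat.pos_of_ne_zero hg0)) h1
    have hy₁0 : y₁ ≠ 0 := fun h => hy0 (by rw [hy₁, h, mul_zero])
    have hy₁lt : y₁ < y := by
      rw [hy₁]
      calc y₁ = 1 * y₁ := (one_mul _).symm
      _ < g * y₁ := by
        exact (Nat.mul_lt_mul_right (Nat.pos_of_ne_zero hy₁0)).mpr (by omega)
    exact hy₁0 (IH y₁ hy₁lt x₁ z₁ heq')
  case pos =>
  -- Step 2: x is odd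
  have hx2 : x % 2 = 1 := by
    by_contra h
    have hx0 : x % 2 = 0 := by omega
    have hy2 : y % 2 = 1 := by
      by_contra h2
      have : (2:ℕ) ∣ Nat.gcd x y := Nat.dvd_gcd (by omega) (by omega)
      omega
    obtain ⟨x₁, rfl⟩ : ∃ x₁, x = 2*x₁ := ⟨x/2, by omega⟩
    have hz0 : z % 2 = 0 := by
      have h1 : z^2 % 2 = (z % 2)^2 % 2 := Nat.pow_mod z 2 2
      have h2 : z^2 = 16*x₁^4 + 2*(p*y^4) := by rw [← heq]; ring
      rcases Nat.mod_two_eq_zero_or_one z with hz | hz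
      · exact hz
      · exfalso
        rw [hz] at h1
        generalize x₁^4 = A at h2
        generalize p*y^4 = B at h2
        generalize z^2 = C at h1 h2
        omega
    obtain ⟨z₁, rfl⟩ : ∃ z₁, z = 2*z₁ := ⟨z/2, by omega⟩
    have hkey : 16*x₁^4 + 2*(p*y^4) = 4*z₁^2 := by
      rw [show (4:ℕ)*z₁^2 = (2*z₁)^2 from by ring, ← heq]; ring
    have hB : (p*y^4) % 2 = 1 := by
      rw [Nat.mul_mod, pow_mod_two _ _ (by norm_num), hy2, hpodd]
    generalize x₁^4 = A at hkey
    generalize p*y^4 = B at hkey hB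
    generalize z₁^2 = C at hkey
    omega
  -- Step 3: y is even
  have hy2 : y % 2 = 0 := by
    by_contra h
    have hyodd : y % 2 = 1 := by omega
    have hX : x^4 % 16 = 1 := odd_pow4_mod16 hx2
    have hW : (p*y^4) % 8 = p % 8 := by
      rw [Nat.mul_mod, odd_pow4_mod8 hyodd]; omega
    have hZ := sq_mod16 z
    have heq' : x^4 + 2*(p*y^4) = z^2 := by rw [← heq]; ring
    generalize x^4 = A at hX heq'
    generalize p*y^4 = B at hW heq'
    generalize z^2 = C at hZ heq'
    omega
  obtain ⟨y₁, rfl⟩ : ∃ y₁, y = 2*y₁ := ⟨y/2, by omega⟩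
  have hy₁0 : y₁ ≠ 0 := fun h => hy0 (by rw [h, mul_zero])
  -- z odd
  have hz2 : z % 2 = 1 := by
    have h1 : z^2 % 2 = (z % 2)^2 % 2 := Nat.pow_mod z 2 2
    have hX : x^4 % 16 = 1 := odd_pow4_mod16 hx2
    have heq' : x^4 + 2*(p*(2*y₁)^4) = z^2 := by rw [← heq]; ring
    rcases Nat.mod_two_eq_zero_or_one z with hz | hz
    · exfalso
      rw [hz] at h1
      generalize x^4 = A at hX heq'
      generalize p*(2*y₁)^4 = B at heq'
      generalize z^2 = C at h1 heq'
      omega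
    · exact hz
  -- z > x^2
  have hzx : x^2 < z := by
    have h2 : x^4 < z^2 := by
      rw [← heq]
      have hpos : 0 < 2*p*(2*y₁)^4 := by positivity
      exact Nat.lt_add_of_pos_right hpos
    have h1 : (x^2)^2 < z^2 := by rw [show (x^2)^2 = x^4 from by ring]; exact h2
    exact lt_of_pow_lt_pow_left₀ 2 (Nat.zero_le z) h1
  -- split z - x^2
  have hxsq : x^2 % 2 = 1 := by have := odd_sq_mod8 hx2; omega
  obtain ⟨u, hu⟩ : ∃ u, z = x^2 + 2*u := by
    refine ⟨(z - x^2)/2, ?_⟩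
    generalize hX : x^2 = X at hxsq hzx
    omega
  set w := u + x^2 with hw
  have hzuw : u + w = z := by rw [hw, hu]; ring
  have hwx : w = u + x^2 := hw
  -- u * w = 8 * p * y₁^4
  have huv : u * w = 8*p*y₁^4 := by
    have hZ : ((x:ℤ))^4 + 2*(p:ℤ)*(2*(y₁:ℤ))^4 = ((x:ℤ)^2 + 2*(u:ℤ))^2 := by
      exact_mod_cast hu ▸ heq
    have h4 : (4:ℤ)*((u:ℤ)*((u:ℤ) + (x:ℤ)^2)) = 4*(8*(p:ℤ)*(y₁:ℤ)^4) := by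
      linear_combination -hZ
    have h5 : (u:ℤ)*((u:ℤ) + (x:ℤ)^2) = 8*(p:ℤ)*(y₁:ℤ)^4 :=
      mul_left_cancel₀ (by norm_num : (4:ℤ) ≠ 0) h4
    have : ((u * (u + x^2) : ℕ) : ℤ) = ((8*p*y₁^4 : ℕ) : ℤ) := by push_cast; linarith [h5]
    rw [hw]
    exact_mod_cast this
  have huw0 : u * w ≠ 0 := by rw [huv]; positivity
  have hu0 : u ≠ 0 := fun h => huw0 (by rw [h, zero_mul])
  have hw0 : w ≠ 0 := fun h => huw0 (by rw [h, mul_zero])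
  -- coprime x z
  have hxz : Nat.Coprime x z := by
    by_contra hnc
    have hx0 : x ≠ 0 := by intro h; rw [h] at hx2; omega
    have hgcd1 : Nat.gcd x z ≠ 1 := hnc
    have hgcd0 : Nat.gcd x z ≠ 0 := fun h => hx0 (Nat.eq_zero_of_gcd_eq_zero_left h)
    set q := (Nat.gcd x z).minFac with hqdef
    have hq : q.Prime := Nat.minFac_prime hgcd1
    have hqx : q ∣ x := (Nat.minFac_dvd _).trans (Nat.gcd_dvd_left x z)
    have hqz : q ∣ z := (Nat.minFac_dvd _).trans (Nat.gcd_dvd_right x z)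
    have hq2 : q ≠ 2 := by
      intro h
      rw [h] at hqx
      obtain ⟨x', rfl⟩ := hqx
      omega
    have hsub : 2*p*(2*y₁)^4 = z^2 - x^4 := by
      generalize hA : x^4 = A at heq
      generalize hB : 2*p*(2*y₁)^4 = B at heq
      omega
    have hqd : q ∣ 2*p*(2*y₁)^4 := by
      rw [hsub]
      exact Nat.dvd_sub (dvd_pow hqz (by norm_num)) (dvd_pow hqx (by norm_num))
    have : q ∣ 2*p ∨ q ∣ (2*y₁)^4 := (hq.dvd_mul).mp hqd
    rcases this with h | h
    · rcases (hq.dvd_mul).mp h with h2 | hp'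
      · exact hq2 ((Nat.prime_dvd_prime_iff_eq hq hp2).mp h2)
      · -- q = p
        have hqp : q = p := (Nat.prime_dvd_prime_iff_eq hq hp).mp hp'
        subst hqp
        -- q^2 divides 2*p*(2y₁)^4, so q ∣ y
        have hq2z : q^2 ∣ z^2 := pow_dvd_pow_of_dvd hqz 2
        have hq2x : q^2 ∣ x^4 := (pow_dvd_pow_of_dvd hqx 2).trans ⟨x^2, by ring⟩
        have hq2d : q^2 ∣ 2*q*(2*y₁)^4 := by rw [hsub]; exact Nat.dvd_sub hq2z hq2x
        obtain ⟨m, hm⟩ := hq2d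
        have hqdy : q ∣ 2*(2*y₁)^4 := by
          refine ⟨m, ?_⟩
          have : q*(2*(2*y₁)^4) = q*(q*m) := by
            rw [show q*(2*(2*y₁)^4) = 2*q*(2*y₁)^4 from by ring, hm]; ring
          exact Nat.eq_of_mul_eq_mul_left hq.pos this
        rcases (hq.dvd_mul).mp hqdy with h2 | h4
        · exact absurd ((Nat.prime_dvd_prime_iff_eq hq hp2).mp h2) hq2
        · have hqy : q ∣ 2*y₁ := Nat.Prime.dvd_of_dvd_pow hq h4
          have : q ∣ Nat.gcd x (2*y₁) := Nat.dvd_gcd hqx hqy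
          rw [hg1] at this
          exact hq.one_lt.ne' (Nat.dvd_one.mp this)
    · -- q ∣ y : contradiction with gcd x y = 1
      have hqy : q ∣ 2*y₁ := Nat.Prime.dvd_of_dvd_pow hq h
      have : q ∣ Nat.gcd x (2*y₁) := Nat.dvd_gcd hqx hqy
      rw [hg1] at this
      exact hq.one_lt.ne' (Nat.dvd_one.mp this)
  -- coprime u w
  have huw : Nat.Coprime u w := by
    have hx2z : Nat.Coprime (x^2) z := hxz.pow_left 2
    have hd1 : Nat.gcd u w ∣ z := hzuw ▸ dvd_add (Nat.gcd_dvd_left u w) (Nat.gcd_dvd_right u w)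
    have hxw : x^2 = w - u := by generalize hX : x^2 = X at hwx ⊢; omega
    have hd2 : Nat.gcd u w ∣ x^2 := by
      rw [hxw]; exact Nat.dvd_sub (Nat.gcd_dvd_right u w) (Nat.gcd_dvd_left u w)
    have := Nat.dvd_gcd hd2 hd1
    rw [hx2z] at this
    exact Nat.dvd_one.mp this
  have h2uw : 2 ∣ u ∨ 2 ∣ w := (hp2.dvd_mul).mp ⟨4*p*y₁^4, by rw [huv]; ring⟩
  have hpuw : p ∣ u ∨ p ∣ w := (hp.dvd_mul).mp ⟨8*y₁^4, by rw [huv]; ring⟩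
  have hnotboth2 : ¬(2 ∣ u ∧ 2 ∣ w) := by
    rintro ⟨ha, hb⟩; have := Nat.dvd_gcd ha hb; rw [huw] at this; omega
  have hnotbothp : ¬(p ∣ u ∧ p ∣ w) := by
    rintro ⟨ha, hb⟩; have := Nat.dvd_gcd ha hb; rw [huw] at this
    exact hp.one_lt.ne' (Nat.dvd_one.mp this)
  have hco2p : Nat.Coprime 2 p := (hp2.coprime_iff_not_dvd).mpr (by omega)
  rcases h2uw with h2u | h2w
  · -- u even, w odd
    have hw2 : ¬ 2 ∣ w := fun h => hnotboth2 ⟨h2u, h⟩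
    have hwodd : w % 2 = 1 := by omega
    rcases hpuw with hpu | hpw
    · -- MAIN CASE: 2 ∣ u, p ∣ u, recursion
      have hpw : ¬ p ∣ w := fun h => hnotbothp ⟨hpu, h⟩
      have hkey : w * (2*p^3*u) = (2*p*y₁)^4 := by
        rw [show w*(2*p^3*u) = 2*p^3*(u*w) from by ring, huv]; ring
      have hcop : Nat.Coprime w (2*p^3*u) := by
        have c2 : Nat.Coprime w 2 := ((hp2.coprime_iff_not_dvd).mpr hw2).symm
        have cp : Nat.Coprime w (p^3) := (((hp.coprime_iff_not_dvd).mpr hpw).symm).pow_right 3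
        exact (c2.mul_right cp).mul_right huw.symm
      obtain ⟨d, hd⟩ := extract_pow4 hcop hkey
      have hd0 : d ≠ 0 := by rintro rfl; exact hw0 (by simpa using hd)
      have hdodd : d % 2 = 1 := by
        rcases Nat.mod_two_eq_zero_or_one d with h | h
        · exfalso
          have h4 : d^4 % 2 = 0 := by rw [pow_mod_two _ _ (by norm_num)]; exact h
          rw [← hd] at h4; omega
        · exact h
      have hdp : ¬ p ∣ d := fun h => hpw (hd ▸ dvd_pow h (by norm_num))
      have hdvd : d^4 ∣ (8*p) * y₁^4 :=
        ⟨u, by rw [show (8*p)*y₁^4 = u*w from huv.symm, hd]; ring⟩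
      have hcod : Nat.Coprime (d^4) (8*p) := by
        have c2 : Nat.Coprime d 2 := by
          refine ((hp2.coprime_iff_not_dvd).mpr ?_).symm
          intro hdd; obtain ⟨m, rfl⟩ := hdd; omega
        have c8 : Nat.Coprime d 8 := by simpa using (c2.pow_right 3 : Nat.Coprime d (2^3))
        exact (c8.mul_right (((hp.coprime_iff_not_dvd).mpr hdp).symm)).pow_left 4
      have hdy : d ∣ y₁ := (Nat.pow_dvd_pow_iff (by norm_num : 4 ≠ 0)).mp
        (Nat.Coprime.dvd_of_dvd_mul_left hcod hdvd)
      obtain ⟨a₁, ha⟩ := hdy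
      have ha₁0 : a₁ ≠ 0 := fun h => hy₁0 (by rw [ha, h, mul_zero])
      have hu8 : u = 8*p*a₁^4 := by
        have h1 : u * d^4 = (8*p*a₁^4) * d^4 := by
          rw [show u*d^4 = u*w from by rw [hd], huv, ha]; ring
        exact Nat.eq_of_mul_eq_mul_right (Nat.pow_pos (Nat.pos_of_ne_zero hd0)) h1
      have heq2 : d^4 = x^2 + 8*p*a₁^4 := by rw [← hd, hwx, hu8]; ring
      have hxd : Nat.Coprime x d := by
        by_contra hnc
        have hq := Nat.minFac_prime hnc
        have hqx : (Nat.gcd x d).minFac ∣ x := (Nat.minFac_dvd _).trans (Nat.gcd_dvd_left x d)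
        have hqd : (Nat.gcd x d).minFac ∣ d := (Nat.minFac_dvd _).trans (Nat.gcd_dvd_right x d)
        have hqw : (Nat.gcd x d).minFac ∣ w := hd ▸ hqd.trans (dvd_pow_self d (by norm_num))
        have hqx2 : (Nat.gcd x d).minFac ∣ x^2 := hqx.trans (dvd_pow_self x (by norm_num))
        have hqu : (Nat.gcd x d).minFac ∣ u := by
          have hxw : u = w - x^2 := by generalize hX : x^2 = X at hwx ⊢; omega
          rw [hxw]; exact Nat.dvd_sub hqw hqx2
        have := Nat.dvd_gcd hqu hqw
        rw [huw] at this
        exact hq.one_lt.ne' (Nat.dvd_one.mp this)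
      have hdx2 : x < d^2 := by
        have h2 : x^2 < (d^2)^2 := by
          rw [show (d^2)^2 = d^4 from by ring, heq2]
          have hpos : 0 < 8*p*a₁^4 := by positivity
          exact Nat.lt_add_of_pos_right hpos
        exact lt_of_pow_lt_pow_left₀ 2 (Nat.zero_le _) h2
      have hd2odd : d^2 % 2 = 1 := by have := odd_sq_mod8 hdodd; omega
      obtain ⟨s, hs⟩ : ∃ s, d^2 = x + 2*s :=
        ⟨(d^2 - x)/2, by generalize hX : d^2 = X at hd2odd hdx2 ⊢; omega⟩
      set t := s + x with ht
      have hsum2 : s + t = d^2 := by rw [ht, hs]; ring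
      have hst : s * t = 2*p*a₁^4 := by
        have hn : (x + 2*s)^2 = x^2 + 8*p*a₁^4 := by
          rw [← hs, show (d^2)^2 = d^4 from by ring]; exact heq2
        have hZ : ((x:ℤ) + 2*(s:ℤ))^2 = (x:ℤ)^2 + 8*(p:ℤ)*(a₁:ℤ)^4 := by exact_mod_cast hn
        have h4 : (4:ℤ)*((s:ℤ)*((s:ℤ)+(x:ℤ))) = 4*(2*(p:ℤ)*(a₁:ℤ)^4) := by
          linear_combination hZ
        have h5 := mul_left_cancel₀ (by norm_num : (4:ℤ) ≠ 0) h4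
        have : ((s * (s + x) : ℕ) : ℤ) = ((2*p*a₁^4 : ℕ) : ℤ) := by push_cast; linarith [h5]
        rw [ht]
        exact_mod_cast this
      have hcost : Nat.Coprime s t := by
        have hxd2 : Nat.Coprime x (d^2) := hxd.pow_right 2
        have hd1 : Nat.gcd s t ∣ d^2 :=
          hsum2 ▸ dvd_add (Nat.gcd_dvd_left s t) (Nat.gcd_dvd_right s t)
        have hd2 : Nat.gcd s t ∣ x := by
          have hxts : x = t - s := by omega
          rw [hxts]; exact Nat.dvd_sub (Nat.gcd_dvd_right s t) (Nat.gcd_dvd_left s t)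
        have := Nat.dvd_gcd hd2 hd1
        rw [hxd2] at this
        exact Nat.dvd_one.mp this
      have h2st : 2 ∣ s ∨ 2 ∣ t := (hp2.dvd_mul).mp ⟨p*a₁^4, by rw [hst]; ring⟩
      have hrec : ∃ c e : ℕ, c ∣ a₁ ∧ c ≠ 0 ∧ e^4 + 2*p*c^4 = d^2 := by
        rcases h2st with h | h
        · exact level2 p hp hmod s t d a₁ hst hsum2 hcost h hdodd ha₁0
        · exact level2 p hp hmod t s d a₁ (by rw [mul_comm]; exact hst)
            (by rw [add_comm]; exact hsum2) hcost.symm h hdodd ha₁0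
      obtain ⟨c, e, hca, hc0, hce⟩ := hrec
      have hclt : c < 2*y₁ := by
        have h1 : c ≤ a₁ := Nat.le_of_dvd (Nat.pos_of_ne_zero ha₁0) hca
        have h2 : a₁ ≤ y₁ := Nat.le_of_dvd (Nat.pos_of_ne_zero hy₁0) ⟨d, by rw [ha]; ring⟩
        omega
      exact hc0 (IH c hclt e d hce)
    · -- 2 ∣ u, p ∣ w : kill, forces p ≡ 1 mod 8
      have hpu : ¬ p ∣ u := fun h => hnotbothp ⟨h, hpw⟩
      have hkey : (2*u) * (p^3*w) = (2*p*y₁)^4 := by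
        rw [show (2*u)*(p^3*w) = 2*p^3*(u*w) from by ring, huv]; ring
      have hcop : Nat.Coprime (2*u) (p^3*w) := by
        have cA : Nat.Coprime 2 (p^3*w) :=
          (hco2p.pow_right 3).mul_right ((hp2.coprime_iff_not_dvd).mpr hw2)
        have cB : Nat.Coprime u (p^3*w) :=
          ((((hp.coprime_iff_not_dvd).mpr hpu).symm).pow_right 3).mul_right huw
        exact Nat.Coprime.mul cA cB
      obtain ⟨e, he⟩ := extract_pow4 hcop hkey
      obtain ⟨f, hf⟩ := extract_pow4 hcop.symm (by rw [mul_comm]; exact hkey)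
      have he2 : 2 ∣ e := hp2.dvd_of_dvd_pow (n := 4) (by rw [← he]; exact ⟨u, by ring⟩)
      obtain ⟨e₁, rfl⟩ := he2
      have hue : u = 8*e₁^4 := by
        have h16 : (2*e₁)^4 = 16*e₁^4 := by ring
        rw [h16] at he
        generalize e₁^4 = E at he ⊢
        omega
      have hpf : p ∣ f := hp.dvd_of_dvd_pow (n := 4) (by rw [← hf]; exact ⟨p^2*w, by ring⟩)
      obtain ⟨f₁, rfl⟩ := hpf
      have hwf : w = p*f₁^4 := by
        have h1 : p^3*w = p^3*(p*f₁^4) := by rw [hf]; ring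
        exact Nat.eq_of_mul_eq_mul_left (Nat.pow_pos hppos) h1
      have hf₁odd : f₁ % 2 = 1 := by
        by_contra h
        have h0 : f₁^4 % 2 = 0 := by rw [pow_mod_two _ _ (by norm_num)]; omega
        have : w % 2 = 0 := by rw [hwf, Nat.mul_mod, h0, Nat.mul_zero, Nat.zero_mod]
        omega
      have hB : (p*f₁^4) % 8 = p % 8 := by rw [Nat.mul_mod, odd_pow4_mod8 hf₁odd]; omega
      have hX : x^2 % 8 = 1 := odd_sq_mod8 hx2
      have heqk : p*f₁^4 = 8*e₁^4 + x^2 := by rw [← hwf, hwx, hue]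
      generalize p*f₁^4 = B at hB heqk
      generalize e₁^4 = E at heqk
      generalize x^2 = X at hX heqk
      omega
  · -- w even, u odd
    have hu2 : ¬ 2 ∣ u := fun h => hnotboth2 ⟨h, h2w⟩
    have huodd : u % 2 = 1 := by omega
    rcases hpuw with hpu | hpw
    · -- 2 ∣ w, p ∣ u : kill, forces p ≡ 7 mod 8
      have hpw : ¬ p ∣ w := fun h => hnotbothp ⟨hpu, h⟩
      have hkey : (p^3*u) * (2*w) = (2*p*y₁)^4 := by
        rw [show (p^3*u)*(2*w) = 2*p^3*(u*w) from by ring, huv]; ring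
      have hcop : Nat.Coprime (p^3*u) (2*w) := by
        have cA : Nat.Coprime (p^3) (2*w) :=
          (hco2p.symm.pow_left 3).mul_right (((hp.coprime_iff_not_dvd).mpr hpw).pow_left 3)
        have cB : Nat.Coprime u (2*w) :=
          (((hp2.coprime_iff_not_dvd).mpr hu2).symm).mul_right huw
        exact Nat.Coprime.mul cA cB
      obtain ⟨f, hf⟩ := extract_pow4 hcop hkey
      obtain ⟨e, he⟩ := extract_pow4 hcop.symm (by rw [mul_comm]; exact hkey)
      have he2 : 2 ∣ e := hp2.dvd_of_dvd_pow (n := 4) (by rw [← he]; exact ⟨w, by ring⟩)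
      obtain ⟨e₁, rfl⟩ := he2
      have hwe : w = 8*e₁^4 := by
        have h16 : (2*e₁)^4 = 16*e₁^4 := by ring
        rw [h16] at he
        generalize e₁^4 = E at he ⊢
        omega
      have hpf : p ∣ f := hp.dvd_of_dvd_pow (n := 4) (by rw [← hf]; exact ⟨p^2*u, by ring⟩)
      obtain ⟨f₁, rfl⟩ := hpf
      have huf : u = p*f₁^4 := by
        have h1 : p^3*u = p^3*(p*f₁^4) := by rw [hf]; ring
        exact Nat.eq_of_mul_eq_mul_left (Nat.pow_pos hppos) h1
      have hf₁odd : f₁ % 2 = 1 := by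
        by_contra h
        have h0 : f₁^4 % 2 = 0 := by rw [pow_mod_two _ _ (by norm_num)]; omega
        have : u % 2 = 0 := by rw [huf, Nat.mul_mod, h0, Nat.mul_zero, Nat.zero_mod]
        omega
      have hB : (p*f₁^4) % 8 = p % 8 := by rw [Nat.mul_mod, odd_pow4_mod8 hf₁odd]; omega
      have hX : x^2 % 8 = 1 := odd_sq_mod8 hx2
      have heqk : 8*e₁^4 = p*f₁^4 + x^2 := by rw [← hwe, hwx, huf]
      generalize p*f₁^4 = B at hB heqk
      generalize e₁^4 = E at heqk
      generalize x^2 = X at hX heqk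
      omega
    · -- 2 ∣ w, p ∣ w : kill, 0 ≡ 2 mod 8
      have hpu : ¬ p ∣ u := fun h => hnotbothp ⟨h, hpw⟩
      have hkey : u * (2*p^3*w) = (2*p*y₁)^4 := by
        rw [show u*(2*p^3*w) = 2*p^3*(u*w) from by ring, huv]; ring
      have hcop : Nat.Coprime u (2*p^3*w) := by
        have c2 : Nat.Coprime u 2 := ((hp2.coprime_iff_not_dvd).mpr hu2).symm
        have cp : Nat.Coprime u (p^3) := (((hp.coprime_iff_not_dvd).mpr hpu).symm).pow_right 3
        exact (c2.mul_right cp).mul_right huw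
      obtain ⟨d, hd⟩ := extract_pow4 hcop hkey
      obtain ⟨e, he⟩ := extract_pow4 hcop.symm (by rw [mul_comm]; exact hkey)
      have hdodd : d % 2 = 1 := by
        rcases Nat.mod_two_eq_zero_or_one d with h | h
        · exfalso
          have h4 : d^4 % 2 = 0 := by rw [pow_mod_two _ _ (by norm_num)]; exact h
          rw [← hd] at h4; omega
        · exact h
      have he2 : 2 ∣ e := hp2.dvd_of_dvd_pow (n := 4) (by rw [← he]; exact ⟨p^3*w, by ring⟩)
      have hep : p ∣ e := hp.dvd_of_dvd_pow (n := 4) (by rw [← he]; exact ⟨2*p^2*w, by ring⟩)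
      obtain ⟨e₂, he₂⟩ := (Nat.Coprime.mul_dvd_of_dvd_of_dvd hco2p he2 hep : 2*p ∣ e)
      have hwe : w = 8*p*e₂^4 := by
        have h1 : 2*p^3*w = 2*p^3*(8*p*e₂^4) := by rw [he, he₂]; ring
        exact Nat.eq_of_mul_eq_mul_left (by positivity) h1
      have hD : d^4 % 8 = 1 := odd_pow4_mod8 hdodd
      have hX : x^2 % 8 = 1 := odd_sq_mod8 hx2
      have heqk : 8*(p*e₂^4) = d^4 + x^2 := by rw [show 8*(p*e₂^4) = 8*p*e₂^4 from by ring, ← hwe, hwx, hd]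
      generalize p*e₂^4 = B at heqk
      generalize d^4 = D at hD heqk
      generalize x^2 = X at hX heqk
      omega
lemma rat_no_quartic (p : ℕ) (hp : p.Prime) (hmod : p % 8 = 3 ∨ p % 8 = 5)
    (u v w : ℚ) (h : u^4 + 2*(p:ℚ)*v^4 = w^2) : v = 0 := by
  by_contra hv
  have hud : ((u.den : ℚ)) ≠ 0 := by exact_mod_cast u.den_nz
  have hvd : ((v.den : ℚ)) ≠ 0 := by exact_mod_cast v.den_nz
  have hwd : ((w.den : ℚ)) ≠ 0 := by exact_mod_cast w.den_nz
  have hnum : ∀ q : ℚ, (q.num : ℚ) = q * q.den := fun q =>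
    ((eq_div_iff (by exact_mod_cast q.den_nz : ((q.den:ℚ)) ≠ 0)).mp
      (Rat.num_div_den q).symm).symm
  set U : ℤ := u.num * (v.den * w.den) with hUdef
  set V : ℤ := v.num * (u.den * w.den) with hVdef
  set W : ℤ := w.num * w.den * (u.den * v.den)^2 with hWdef
  set D : ℚ := (u.den : ℚ) * v.den * w.den with hDdef
  have hU : (U : ℚ) = u * D := by rw [hUdef, hDdef]; push_cast; rw [hnum u]; ring
  have hV : (V : ℚ) = v * D := by rw [hVdef, hDdef]; push_cast; rw [hnum v]; ring
  have hW : (W : ℚ) = w * D^2 := by rw [hWdef, hDdef]; push_cast; rw [hnum w]; ring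
  have heqQ : (U:ℚ)^4 + 2*(p:ℚ)*(V:ℚ)^4 = (W:ℚ)^2 := by
    rw [hU, hV, hW]; linear_combination D^4 * h
  have hZ : U^4 + 2*(p:ℤ)*V^4 = W^2 := by exact_mod_cast heqQ
  have habs4 : ∀ n : ℤ, |n|^4 = n^4 := by
    intro n; rcases abs_cases n with ⟨h', _⟩ | ⟨h', _⟩ <;> rw [h'] <;> ring
  have habs2 : ∀ n : ℤ, |n|^2 = n^2 := by
    intro n; rcases abs_cases n with ⟨h', _⟩ | ⟨h', _⟩ <;> rw [h'] <;> ring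
  have hN : U.natAbs^4 + 2*p*V.natAbs^4 = W.natAbs^2 := by
    have : ((U.natAbs^4 + 2*p*V.natAbs^4 : ℕ) : ℤ) = ((W.natAbs^2 : ℕ) : ℤ) := by
      push_cast
      rw [habs4 U, habs4 V, habs2 W]
      exact hZ
    exact_mod_cast this
  have hV0 : V.natAbs = 0 := nat_no_quartic p hp hmod V.natAbs U.natAbs W.natAbs hN
  have : V = 0 := Int.natAbs_eq_zero.mp hV0
  rw [hVdef] at this
  rcases mul_eq_zero.mp this with h' | h'
  · exact hv (Rat.num_eq_zero.mp h')
  · have : (u.den : ℤ) ≠ 0 := by exact_mod_cast u.den_nz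
    have : (w.den : ℤ) ≠ 0 := by exact_mod_cast w.den_nz
    rcases mul_eq_zero.mp h' with h'' | h'' <;> simp_all

lemma rat_key (p : ℕ) (hp : p.Prime) (hmod : p % 8 = 3 ∨ p % 8 = 5)
    (y0 y1 y2 y3 : ℚ) (h1 : y1^2 + 2*y0*y2 - 2*(p:ℚ)*y3^2 = 0)
    (h2 : y0*y3 + y1*y2 = 0) : y0*y1 - 2*(p:ℚ)*y2*y3 = 0 := by
  by_cases h3 : y3 = 0
  · subst h3
    rcases mul_eq_zero.mp (by linarith : y1*y2 = 0) with h | h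
    · rw [h]; ring
    · have : y1^2 = 0 := by rw [h] at h1; linarith
      have : y1 = 0 := by
        exact pow_eq_zero_iff (by norm_num : 2 ≠ 0) |>.mp this
      rw [this]; ring
  · exfalso
    apply h3
    exact rat_no_quartic p hp hmod y2 y3 (y1*y3 - y2^2)
      (by linear_combination -y3^2 * h1 + 2*y2*y3*h2)
open Polynomial in
theorem x4_add_2p_superirreducible' (p : ℕ) (hp : p.Prime)
    (hmod : p % 8 = 3 ∨ p % 8 = 5)
    (hirr : Irreducible (X ^ 4 + C (2 * p : ℚ))) :
    Irreducible (X ^ 4 + C (2 * p : ℚ)) ∧ ∀ g : Polynomial ℚ, 0 < g.natDegree →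
      g.natDegree ≤ 2 → Irreducible ((X ^ 4 + C (2 * p : ℚ)).comp g) := by
  refine ⟨hirr, ?_⟩
  intro g hg1 hg2
  by_contra hnotirr
  set f : ℚ[X] := X ^ 4 + C (2 * p : ℚ) with hfdef
  have hfm : f.Monic := monic_X_pow_add_C _ (by norm_num)
  have hfd : f.natDegree = 4 := natDegree_X_pow_add_C
  have hfdeg : f.degree = 4 := degree_X_pow_add_C (by norm_num) _
  set q : ℚ[X] := f.comp g with hqdef
  have hqd : q.natDegree = 4 * g.natDegree := by rw [hqdef, natDegree_comp, hfd]
  have hqpos : 0 < q.natDegree := by omega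
  have hq0 : q ≠ 0 := by
    intro h
    rw [h, natDegree_zero] at hqpos
    exact absurd hqpos (lt_irrefl 0)
  have hqu : ¬ IsUnit q := not_isUnit_of_natDegree_pos q (by omega)
  obtain ⟨F, hFirr, hFdvd⟩ := WfDvdMonoid.exists_irreducible_factor hqu hq0
  have hFpos : 0 < F.natDegree := hFirr.natDegree_pos
  have hFdeg0 : (F.map (algebraMap ℚ (AlgebraicClosure ℚ))).degree ≠ 0 := by
    rw [degree_map]
    intro h
    have h2 : F.natDegree = 0 := natDegree_eq_of_degree_eq_some h
    omega
  obtain ⟨α, hαroot⟩ := IsAlgClosed.exists_root _ hFdeg0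
  have hαF : aeval α F = 0 := by rwa [aeval_def, ← eval_map]
  have hαq : aeval α q = 0 := by
    obtain ⟨G, hG⟩ := hFdvd; rw [hG, map_mul, hαF, zero_mul]
  set β := aeval α g with hβdef
  have hβf : aeval β f = 0 := by rw [hβdef, ← aeval_comp]; exact hαq
  have hβi : IsIntegral ℚ β := IsAlgebraic.isIntegral (⟨f, hfm.ne_zero, hβf⟩ : IsAlgebraic ℚ β)
  have hαi : IsIntegral ℚ α := IsAlgebraic.isIntegral (⟨F, hFirr.ne_zero, hαF⟩ : IsAlgebraic ℚ α)
  have hmin : minpoly ℚ β = f := (minpoly.eq_of_irreducible_of_monic hirr hβf hfm).symm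
  have hβmem : β ∈ IntermediateField.adjoin ℚ {α} := by
    apply IntermediateField.algebra_adjoin_le_adjoin ℚ {α}
    rw [Algebra.adjoin_singleton_eq_range_aeval]
    exact ⟨g, rfl⟩
  have hle : IntermediateField.adjoin ℚ {β} ≤ IntermediateField.adjoin ℚ {α} :=
    IntermediateField.adjoin_simple_le_iff.mpr hβmem
  have hEr : Module.finrank ℚ (IntermediateField.adjoin ℚ {β}) = 4 := by
    rw [IntermediateField.adjoin.finrank hβi, hmin, hfd]
  have hKr : Module.finrank ℚ (IntermediateField.adjoin ℚ {α}) = F.natDegree := by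
    rw [IntermediateField.adjoin.finrank hαi]
    have h1 : minpoly ℚ α ∣ F := minpoly.dvd ℚ α hαF
    have h2 : Associated (minpoly ℚ α) F :=
      (minpoly.irreducible hαi).associated_of_dvd hFirr h1
    exact natDegree_eq_of_degree_eq (degree_eq_degree_of_associated h2)
  have h4dvd : 4 ∣ F.natDegree := by
    rw [← hKr, ← hEr]
    exact ⟨_, (IntermediateField.finrank_bot_mul_relfinrank hle).symm⟩
  have hFle : F.natDegree ≤ q.natDegree := natDegree_le_of_dvd hFdvd hq0
  have hFne : F.natDegree ≠ q.natDegree := by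
    intro he
    apply hnotirr
    obtain ⟨G, hG⟩ := hFdvd
    have hG0 : G ≠ 0 := fun h => hq0 (by rw [hG, h, mul_zero])
    have hF0 : F ≠ 0 := hFirr.ne_zero
    have hGd : G.natDegree = 0 := by
      have hnd := natDegree_mul hF0 hG0
      rw [← hG] at hnd
      omega
    obtain ⟨cG, rfl⟩ := natDegree_eq_zero.mp hGd
    have hcG : cG ≠ 0 := fun h => hG0 (by rw [h, map_zero])
    have hu : IsUnit (C cG) := isUnit_C.mpr (isUnit_iff_ne_zero.mpr hcG)
    have hassoc : Associated F q := ⟨hu.unit, by rw [hG, hu.unit_spec]⟩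
    exact hassoc.irreducible hFirr
  have hdeg2 : g.natDegree = 2 := by omega
  have hF4 : F.natDegree = 4 := by omega
  haveI : FiniteDimensional ℚ (IntermediateField.adjoin ℚ {α}) :=
    IntermediateField.adjoin.finiteDimensional hαi
  have heqF : IntermediateField.adjoin ℚ {β} = IntermediateField.adjoin ℚ {α} :=
    IntermediateField.eq_of_le_of_finrank_le hle (by rw [hEr, hKr, hF4])
  have hαmem : α ∈ IntermediateField.adjoin ℚ {β} := by
    rw [heqF]; exact IntermediateField.mem_adjoin_simple_self ℚ α
  have hαadj : α ∈ Algebra.adjoin ℚ {β} := by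
    rw [← IntermediateField.mem_toSubalgebra,
      IntermediateField.adjoin_simple_toSubalgebra_of_isAlgebraic hβi.isAlgebraic] at hαmem
    exact hαmem
  obtain ⟨P, hP⟩ : ∃ P : ℚ[X], aeval β P = α := by
    rw [Algebra.adjoin_singleton_eq_range_aeval] at hαadj
    exact hαadj
  set R := P %ₘ f with hRdef
  have hR : aeval β R = α := by
    rw [← hP]
    conv_rhs => rw [← modByMonic_add_div P f]
    rw [map_add, map_mul, hβf, zero_mul, add_zero]
  have hRd : R.natDegree < 4 := by
    have h1 : f ≠ 1 := by intro h; rw [h, natDegree_one] at hfd; omega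
    have h2 := natDegree_modByMonic_lt P hfm h1
    rw [← hRdef] at h2
    omega
  set τ := algebraMap ℚ (AlgebraicClosure ℚ) with hτdef
  set r0 := R.coeff 0 with hr0
  set r1 := R.coeff 1 with hr1
  set r2 := R.coeff 2 with hr2
  set r3 := R.coeff 3 with hr3
  set a := g.coeff 2 with hadef
  set b := g.coeff 1 with hbdef
  set c := g.coeff 0 with hcdef
  have hgne : g ≠ 0 := by intro h; rw [h, natDegree_zero] at hdeg2; omega
  have ha : a ≠ 0 := by
    have h1 := leadingCoeff_ne_zero.mpr hgne
    rwa [leadingCoeff, hdeg2] at h1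
  have hαexp : α = τ r0 + τ r1 * β + τ r2 * β^2 + τ r3 * β^3 := by
    rw [← hR, aeval_eq_sum_range' hRd β, Finset.sum_range_succ, Finset.sum_range_succ,
      Finset.sum_range_succ, Finset.sum_range_one]
    simp only [Algebra.smul_def, pow_zero, mul_one, pow_one]
    try ring
  have hgα : τ c + τ b * α + τ a * α^2 = β := by
    have h1 : aeval α g = β := hβdef.symm
    rw [aeval_eq_sum_range' (show g.natDegree < 3 by omega) α, Finset.sum_range_succ,
      Finset.sum_range_succ, Finset.sum_range_one] at h1
    simp only [Algebra.smul_def, pow_zero, mul_one, pow_one] at h1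
    rw [← h1]
    try ring
  have hβ4 : β^4 = -(2*(p:AlgebraicClosure ℚ)) := by
    have h1 : aeval β f = 0 := hβf
    rw [hfdef] at h1
    simp only [map_add, map_pow, aeval_X, aeval_C, map_mul, map_ofNat, map_natCast] at h1
    linear_combination h1
  rw [hαexp] at hgα
  have key : τ ((2*a*r0+b)^2 - 2*(p:ℚ)*((2*a*r2)^2 + 2*(2*a*r1)*(2*a*r3)) - (b^2 - 4*a*c))
      + τ (2*(2*a*r0+b)*(2*a*r1) - 4*(p:ℚ)*(2*a*r2)*(2*a*r3) - 4*a) * β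
      + τ ((2*a*r1)^2 + 2*(2*a*r0+b)*(2*a*r2) - 2*(p:ℚ)*(2*a*r3)^2) * β^2
      + τ (2*(2*a*r0+b)*(2*a*r3) + 2*(2*a*r1)*(2*a*r2)) * β^3 = 0 := by
    simp only [map_add, map_sub, map_mul, map_pow, map_ofNat, map_natCast]
    linear_combination (4*τ a) * hgα -
      ((2*τ a*τ r2)^2 + 2*(2*τ a*τ r1)*(2*τ a*τ r3)
        + (2*(2*τ a*τ r2)*(2*τ a*τ r3)) * β + ((2*τ a*τ r3)^2) * β^2) * hβ4
  simp only [map_add, map_sub, map_mul, map_pow, map_ofNat, map_natCast] at key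
  set W : ℚ[X] := C (2*(2*a*r0+b)*(2*a*r3) + 2*(2*a*r1)*(2*a*r2)) * X^3
      + C ((2*a*r1)^2 + 2*(2*a*r0+b)*(2*a*r2) - 2*(p:ℚ)*(2*a*r3)^2) * X^2
      + C (2*(2*a*r0+b)*(2*a*r1) - 4*(p:ℚ)*(2*a*r2)*(2*a*r3) - 4*a) * X
      + C ((2*a*r0+b)^2 - 2*(p:ℚ)*((2*a*r2)^2 + 2*(2*a*r1)*(2*a*r3)) - (b^2 - 4*a*c))
    with hWdef
  have hWv : aeval β W = 0 := by
    rw [hWdef]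
    simp only [map_add, map_sub, map_mul, map_pow, map_ofNat, map_natCast, aeval_C, aeval_X]
    simp only [← hτdef]
    linear_combination key
  have hfW : f ∣ W := hmin ▸ minpoly.dvd ℚ β hWv
  have hW0 : W = 0 := by
    refine eq_zero_of_dvd_of_degree_lt hfW ?_
    refine lt_of_le_of_lt (degree_cubic_le) ?_
    rw [hfdeg]
    decide
  have hc1 : 2*(2*a*r0+b)*(2*a*r1) - 4*(p:ℚ)*(2*a*r2)*(2*a*r3) - 4*a = 0 := by
    have h1 := congrArg (fun s : ℚ[X] => s.coeff 1) hW0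
    simp only [hWdef, coeff_add, coeff_C_mul, coeff_X_pow, coeff_C, coeff_zero,
      coeff_C_mul, mul_ite, mul_one, mul_zero, coeff_X] at h1
    simpa using h1
  have hc2 : (2*a*r1)^2 + 2*(2*a*r0+b)*(2*a*r2) - 2*(p:ℚ)*(2*a*r3)^2 = 0 := by
    have h1 := congrArg (fun s : ℚ[X] => s.coeff 2) hW0
    simp only [hWdef, coeff_add, coeff_C_mul, coeff_X_pow, coeff_C, coeff_zero,
      mul_ite, mul_one, mul_zero, coeff_X] at h1
    simpa using h1
  have hc3 : 2*(2*a*r0+b)*(2*a*r3) + 2*(2*a*r1)*(2*a*r2) = 0 := by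
    have h1 := congrArg (fun s : ℚ[X] => s.coeff 3) hW0
    simp only [hWdef, coeff_add, coeff_C_mul, coeff_X_pow, coeff_C, coeff_zero,
      mul_ite, mul_one, mul_zero, coeff_X] at h1
    simpa using h1
  have hk := rat_key p hp hmod (2*a*r0+b) (2*a*r1) (2*a*r2) (2*a*r3)
    (by linear_combination hc2) (by linear_combination hc3 / 2)
  apply ha
  linear_combination (-1/4 : ℚ) * hc1 + (1/2 : ℚ) * hk

open Polynomial

/-- A polynomial `f ∈ R[x]` is `k`-superirreducible over `R` if it is irreducible and
`f(g(x))` is irreducible for every nonconstant `g ∈ R[x]` of degree at most `k`. -/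
def IsSuperirreducible (R : Type*) [CommRing R] [IsDomain R] (k : ℕ) (f : Polynomial R) : Prop :=
  Irreducible f ∧ ∀ g : Polynomial R, 0 < g.natDegree → g.natDegree ≤ k →
    Irreducible (f.comp g)

theorem x4_add_2p_superirreducible (p : ℕ) (hp : p.Prime)
    (hmod : p % 8 = 3 ∨ p % 8 = 5)
    (hirr : Irreducible (X ^ 4 + C (2 * p : ℚ))) :
    IsSuperirreducible ℚ 2 (X ^ 4 + C (2 * p : ℚ)) :=
  x4_add_2p_superirreducible' p hp hmod hirr
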